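/- Fix an integer m ≥ 1 and δ ∈ (0, 1/2]. Let D_δ be the product distribution on {0, 1, 2}^m in which each coordinate independently equals 2 with probability δ/m, equals 1 with probability δ, and equals 0 otherwise. Let S_1, …, S_t ⊆ {1, …, m} be sets each of size exactly s ≥ 1, and let M be the menu consisting of the null entry (0, 0), the entries (e_j, 2) for 1 ≤ j ≤ m (each item priced at 2), and the entries (x^{(i)}, 1) for 1 ≤ i ≤ t, where x^{(i)} is the uniform lottery over S_i, i.e., x^{(i)}_j = 1/s if j ∈ S_i and x^{(i)}_j = 0 otherwise. Then for every selection rule σ for M, Rev_{D_δ}(M, σ) ≤ 2δ + t · (8δ)^{s/2}. (This is the over-fitting phenomenon: an auction tailored to lotteries over specific sampled sets extracts only O(δ) revenue from the true distribution when s is large.) -/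

import Mathlib

open MeasureTheory

/-- An entry of a menu: a lottery (vector of allocation probabilities) together with a price. -/
abbrev Entry (m : ℕ) := (Fin m → ℝ) × ℝ

/-- A lottery: nonnegative coordinates summing to at most 1. -/
def IsLottery (m : ℕ) (x : Fin m → ℝ) : Prop := (∀ j, 0 ≤ x j) ∧ ∑ j, x j ≤ 1

/-- A menu: a finite set of entries containing the null entry `(0, 0)`,
all of whose entries are lotteries. -/
def IsMenu (m : ℕ) (M : Finset (Entry m)) : Prop :=
  (0, 0) ∈ M ∧ ∀ e ∈ M, IsLottery m e.1

/-- Utility of entry `e` for a buyer with valuation `v`. -/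
def utility {m : ℕ} (v : Fin m → ℝ) (e : Entry m) : ℝ := (∑ j, v j * e.1 j) - e.2

/-- A selection rule for menu `M`: picks, for each valuation, a utility-maximizing entry of `M`. -/
def IsSelection {m : ℕ} (M : Finset (Entry m)) (s : (Fin m → ℝ) → Entry m) : Prop :=
  ∀ v, s v ∈ M ∧ ∀ e ∈ M, utility v e ≤ utility v (s v)

/-- Revenue of a selection rule `s` under distribution `D`: expected price paid. -/
noncomputable def revSel {m : ℕ} (D : Measure (Fin m → ℝ))
    (s : (Fin m → ℝ) → Entry m) : ℝ :=
  ∫ v, (s v).2 ∂D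

/-- Revenue of menu `M` under distribution `D`: supremum over selection rules. -/
noncomputable def Rev {m : ℕ} (D : Measure (Fin m → ℝ)) (M : Finset (Entry m)) : ℝ :=
  sSup {r | ∃ s, IsSelection M s ∧ r = revSel D s}

/-- Optimal revenue for a distribution `D`: supremum over all menus. -/
noncomputable def OPT {m : ℕ} (D : Measure (Fin m → ℝ)) : ℝ :=
  sSup {r | ∃ M : Finset (Entry m), IsMenu m M ∧ r = Rev D M}

/-- The per-item value distribution of the over-fitting example: value `2` with probability
`δ/m`, value `1` with probability `δ`, and value `0` otherwise. -/
noncomputable def itemDist (m : ℕ) (δ : ℝ) : Measure ℝ :=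
  ENNReal.ofReal (δ / m) • Measure.dirac (2 : ℝ) +
    ENNReal.ofReal δ • Measure.dirac (1 : ℝ) +
    ENNReal.ofReal (1 - δ - δ / m) • Measure.dirac (0 : ℝ)

section Aux

variable {m : ℕ} {δ : ℝ}

open Classical in
lemma itemDist_apply {s : Set ℝ} (hs : MeasurableSet s) :
    itemDist m δ s = (if (2:ℝ) ∈ s then ENNReal.ofReal (δ/m) else 0)
      + (if (1:ℝ) ∈ s then ENNReal.ofReal δ else 0)
      + (if (0:ℝ) ∈ s then ENNReal.ofReal (1 - δ - δ/m) else 0) := by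
  simp [itemDist, Measure.add_apply, Measure.smul_apply, Measure.dirac_apply' _ hs,
    Set.indicator_apply, smul_eq_mul, mul_ite, mul_one, mul_zero]

lemma itemDist_total (hm : 1 ≤ m) (h0 : 0 < δ) (h2 : δ ≤ 1/2) :
    ENNReal.ofReal (δ/m) + ENNReal.ofReal δ + ENNReal.ofReal (1 - δ - δ/m) = 1 := by
  have hm' : (1:ℝ) ≤ m := by exact_mod_cast hm
  have hdm : δ / m ≤ δ := div_le_self h0.le hm'
  rw [← ENNReal.ofReal_add (by positivity) h0.le,
    ← ENNReal.ofReal_add (by positivity) (by nlinarith)]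
  norm_num
  ring

lemma itemDist_prob (hm : 1 ≤ m) (h0 : 0 < δ) (h2 : δ ≤ 1/2) :
    IsProbabilityMeasure (itemDist m δ) := by
  constructor
  rw [itemDist_apply MeasurableSet.univ]
  simp only [Set.mem_univ, if_true]
  exact itemDist_total hm h0 h2

lemma itemDist_Ici2 (hm : 1 ≤ m) (h0 : 0 < δ) (h2 : δ ≤ 1/2) :
    itemDist m δ (Set.Ici (2:ℝ)) = ENNReal.ofReal (δ/m) := by
  rw [itemDist_apply measurableSet_Ici]
  norm_num [Set.mem_Ici]

lemma itemDist_Ici1 (hm : 1 ≤ m) (h0 : 0 < δ) (h2 : δ ≤ 1/2) :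
    itemDist m δ (Set.Ici (1:ℝ)) ≤ ENNReal.ofReal (2*δ) := by
  rw [itemDist_apply measurableSet_Ici]
  norm_num [Set.mem_Ici]
  rw [← ENNReal.ofReal_add (by positivity) h0.le]
  rw [← ENNReal.ofReal_ofNat 2, ← ENNReal.ofReal_mul (by norm_num)]
  apply ENNReal.ofReal_le_ofReal
  have hm' : (1:ℝ) ≤ m := by exact_mod_cast hm
  have hdm : δ / m ≤ δ := div_le_self h0.le hm'
  linarith

lemma itemDist_support (hm : 1 ≤ m) (h0 : 0 < δ) (h2 : δ ≤ 1/2) :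
    itemDist m δ ({0, 1, 2} : Set ℝ) = 1 := by
  rw [itemDist_apply (by measurability)]
  norm_num [Set.mem_insert_iff]
  exact itemDist_total hm h0 h2

end Aux

set_option maxHeartbeats 2000000 in
/-- **Over-fitting.** The menu consisting of each item priced at `2` together with, for
each of `t` given sets `S_i` of size `s`, the uniform lottery over `S_i` priced at `1`,
extracts at most `2δ + t·(8δ)^(s/2)` revenue from the true product distribution `D_δ`. -/
theorem overfitting_example_lottery_menu :
    ∀ (m : ℕ), 1 ≤ m → ∀ δ : ℝ, 0 < δ → δ ≤ 1 / 2 →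
      ∀ (t s : ℕ), 1 ≤ s → ∀ S : Fin t → Finset (Fin m), (∀ i, (S i).card = s) →
        let M : Finset (Entry m) :=
          insert (0, 0)
            ((Finset.univ.image fun j : Fin m => (Pi.single j (1 : ℝ), (2 : ℝ))) ∪
              (Finset.univ.image fun i : Fin t =>
                ((fun j => if j ∈ S i then (1 : ℝ) / s else 0), (1 : ℝ))))
        ∀ σ : (Fin m → ℝ) → Entry m, IsSelection M σ →
          revSel (Measure.pi fun _ : Fin m => itemDist m δ) σ ≤
            2 * δ + t * (8 * δ) ^ ((s : ℝ) / 2) := by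
  intro m hm δ h0 h2 t s hs S hS M σ hσ
  haveI : IsProbabilityMeasure (itemDist m δ) := itemDist_prob hm h0 h2
  haveI : ∀ _ : Fin m, IsProbabilityMeasure (itemDist m δ) := fun _ => itemDist_prob hm h0 h2
  set D : Measure (Fin m → ℝ) := Measure.pi fun _ : Fin m => itemDist m δ with hD
  haveI : IsProbabilityMeasure D := by rw [hD]; infer_instance
  have hs0 : (0:ℝ) < s := by exact_mod_cast hs
  -- events
  set A : Set (Fin m → ℝ) := {v | ∃ j, (2:ℝ) ≤ v j} with hA
  set B : Fin t → Set (Fin m → ℝ) := fun i => {v | (s:ℝ) ≤ ∑ j ∈ S i, v j} with hB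
  have hAmeas : MeasurableSet A := by
    have : A = ⋃ j, (fun v : Fin m → ℝ => v j) ⁻¹' Set.Ici 2 := by
      ext v; simp [hA, Set.mem_Ici]
    rw [this]
    exact MeasurableSet.iUnion fun j => (measurable_pi_apply j) measurableSet_Ici
  have hBmeas : ∀ i, MeasurableSet (B i) := by
    intro i
    have : B i = (fun v : Fin m → ℝ => ∑ j ∈ S i, v j) ⁻¹' Set.Ici (s:ℝ) := by
      ext v; simp [hB, Set.mem_Ici]
    rw [this]
    exact (Finset.measurable_sum _ fun j _ => measurable_pi_apply j) measurableSet_Ici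
  -- the dominating function
  set g : (Fin m → ℝ) → ℝ :=
    fun v => 2 * A.indicator (fun _ => (1:ℝ)) v + ∑ i, (B i).indicator (fun _ => (1:ℝ)) v
    with hg
  have hind_nonneg : ∀ (C : Set (Fin m → ℝ)) v, (0:ℝ) ≤ C.indicator (fun _ => (1:ℝ)) v :=
    fun C v => Set.indicator_nonneg (fun _ _ => zero_le_one) v
  have hg_nonneg : ∀ v, 0 ≤ g v := by
    intro v
    have := hind_nonneg A v
    have h2' := Finset.sum_nonneg fun i (_ : i ∈ Finset.univ) => hind_nonneg (B i) v
    positivity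
  -- pointwise bound
  have hpoint : ∀ v, 0 ≤ (σ v).2 ∧ (σ v).2 ≤ g v := by
    intro v
    obtain ⟨hmem, hopt⟩ := hσ v
    have hnull : (0:ℝ) ≤ utility v (σ v) := by
      have := hopt (0,0) (Finset.mem_insert_self _ _)
      simpa [utility] using this
    rcases Finset.mem_insert.mp hmem with h | h
    · rw [h]; exact ⟨le_refl _, hg_nonneg v⟩
    · rcases Finset.mem_union.mp h with h | h
      · obtain ⟨j, -, hj⟩ := Finset.mem_image.mp h
        have hu : utility v (σ v) = v j - 2 := by
          rw [← hj]
          simp [utility, Pi.single_apply, mul_ite]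
        have hvj : (2:ℝ) ≤ v j := by rw [hu] at hnull; linarith
        have hvA : v ∈ A := ⟨j, hvj⟩
        have hp : (σ v).2 = 2 := by rw [← hj]
        rw [hp]
        refine ⟨by norm_num, ?_⟩
        simp only [hg]
        have := Finset.sum_nonneg fun i (_ : i ∈ Finset.univ) => hind_nonneg (B i) v
        rw [Set.indicator_of_mem hvA]
        linarith
      · obtain ⟨i, -, hi⟩ := Finset.mem_image.mp h
        have hu : utility v (σ v) = (∑ j ∈ S i, v j) / s - 1 := by
          rw [← hi]
          simp only [utility]
          congr 1
          rw [Finset.sum_congr rfl (fun j _ => by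
            show v j * (if j ∈ S i then (1:ℝ)/s else 0) = if j ∈ S i then v j / s else 0
            split <;> ring)]
          rw [Finset.sum_ite_mem, Finset.univ_inter, Finset.sum_div]
        have hvB : v ∈ B i := by
          rw [hu] at hnull
          have : (1:ℝ) ≤ (∑ j ∈ S i, v j) / s := by linarith
          exact (one_le_div hs0).mp this
        have hp : (σ v).2 = 1 := by rw [← hi]
        rw [hp]
        refine ⟨by norm_num, ?_⟩
        simp only [hg]
        have h1 : (1:ℝ) ≤ ∑ i', (B i').indicator (fun _ => (1:ℝ)) v := by
          have := Finset.single_le_sum (f := fun i' => (B i').indicator (fun _ => (1:ℝ)) v)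
            (fun i' _ => hind_nonneg (B i') v) (Finset.mem_univ i)
          simpa [Set.indicator_of_mem hvB] using this
        have := hind_nonneg A v
        linarith
  -- integrability of g
  have hint_ind : ∀ (C : Set (Fin m → ℝ)), MeasurableSet C →
      Integrable (C.indicator (fun _ => (1:ℝ))) D := by
    intro C hC
    exact (integrable_const (1:ℝ)).indicator hC
  have hgint : Integrable g D := by
    apply Integrable.add
    · exact ((hint_ind A hAmeas).const_mul 2)
    · exact integrable_finset_sum _ fun i _ => hint_ind (B i) (hBmeas i)
  -- revenue bounded by ∫ g
  have hrev : revSel D σ ≤ ∫ v, g v ∂D := by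
    apply integral_mono_of_nonneg
    · exact Filter.Eventually.of_forall fun v => (hpoint v).1
    · exact hgint
    · exact Filter.Eventually.of_forall fun v => (hpoint v).2
  -- compute ∫ g
  have hgval : ∫ v, g v ∂D = 2 * (D A).toReal + ∑ i, (D (B i)).toReal := by
    rw [hg, integral_add ((hint_ind A hAmeas).const_mul 2)
      (integrable_finset_sum _ fun i _ => hint_ind (B i) (hBmeas i)),
      integral_const_mul, integral_finset_sum _ fun i _ => hint_ind (B i) (hBmeas i)]
    congr 1
    · rw [integral_indicator_const _ hAmeas]; simp [Measure.real]
    · exact Finset.sum_congr rfl fun i _ => by rw [integral_indicator_const _ (hBmeas i)]; simp [Measure.real]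
  -- bound D A
  have hDA : (D A).toReal ≤ δ := by
    have hsub : A ⊆ ⋃ j, (fun v : Fin m → ℝ => v j) ⁻¹' Set.Ici 2 := by
      intro v ⟨j, hj⟩; exact Set.mem_iUnion.mpr ⟨j, hj⟩
    have hcoord : ∀ j : Fin m, D ((fun v : Fin m → ℝ => v j) ⁻¹' Set.Ici 2)
        = ENNReal.ofReal (δ/m) := by
      intro j
      have hset : (fun v : Fin m → ℝ => v j) ⁻¹' Set.Ici 2
          = Set.pi Set.univ (fun k => if k = j then Set.Ici (2:ℝ) else Set.univ) := by
        ext v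
        simp only [Set.mem_preimage, Set.mem_pi, Set.mem_univ, true_implies]
        constructor
        · intro h k; split
          · subst ‹k = j›; exact h
          · trivial
        · intro h; have := h j; simpa using this
      rw [hD, hset, Measure.pi_pi]
      rw [Finset.prod_eq_single j (fun k _ hk => by simp [hk, measure_univ]) (by simp)]
      simp [itemDist_Ici2 hm h0 h2]
    have hle : D A ≤ ENNReal.ofReal δ := by
      calc D A ≤ ∑' j : Fin m, D ((fun v : Fin m → ℝ => v j) ⁻¹' Set.Ici 2) :=
            le_trans (measure_mono hsub) (measure_iUnion_le _)
        _ = m * ENNReal.ofReal (δ/m) := by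
            rw [tsum_fintype]
            simp only [hcoord, Finset.sum_const, Finset.card_univ, Fintype.card_fin,
              nsmul_eq_mul]
        _ = ENNReal.ofReal δ := by
            rw [← ENNReal.ofReal_natCast m, ← ENNReal.ofReal_mul (by positivity)]
            congr 1
            field_simp
    calc (D A).toReal ≤ (ENNReal.ofReal δ).toReal :=
          ENNReal.toReal_mono ENNReal.ofReal_ne_top hle
      _ = δ := ENNReal.toReal_ofReal h0.le
  -- bound each D (B i)
  set k : ℕ := (s+1)/2 with hk
  have hks : k ≤ s := by omega
  have hDB : ∀ i, (D (B i)).toReal ≤ (8*δ) ^ ((s:ℝ)/2) := by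
    intro i
    -- good set
    set G : Set (Fin m → ℝ) := Set.pi Set.univ (fun _ => ({0,1,2} : Set ℝ)) with hG
    have hGmeas : MeasurableSet G := by
      apply MeasurableSet.univ_pi
      intro _; measurability
    have hGfull : D Gᶜ = 0 := by
      have : D G = 1 := by
        rw [hD, hG, Measure.pi_pi]
        simp [itemDist_support hm h0 h2]
      rw [measure_compl hGmeas (measure_ne_top _ _), this, measure_univ, tsub_self]
    -- covering
    classical
    have hcover : B i ∩ G ⊆
        ⋃ T ∈ Finset.powersetCard k (S i), {v : Fin m → ℝ | ∀ j ∈ T, (1:ℝ) ≤ v j} := by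
      rintro v ⟨hvB', hvG⟩
      have hval : ∀ j : Fin m, v j = 0 ∨ v j = 1 ∨ v j = 2 := by
        intro j
        have := hvG j (Set.mem_univ j)
        simpa [Set.mem_insert_iff] using this
      set F := (S i).filter (fun j => (1:ℝ) ≤ v j) with hF
      have hsplit : ∑ j ∈ F, v j + ∑ j ∈ (S i).filter (fun j => ¬ (1:ℝ) ≤ v j), v j
          = ∑ j ∈ S i, v j :=
        Finset.sum_filter_add_sum_filter_not (S i) _ v
      have hzero : ∑ j ∈ (S i).filter (fun j => ¬ (1:ℝ) ≤ v j), v j = 0 := by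
        apply Finset.sum_eq_zero
        intro j hj
        have hlt := (Finset.mem_filter.mp hj).2
        rcases hval j with h | h | h
        · exact h
        · exact absurd (le_of_eq h.symm) hlt
        · exact absurd (by linarith [h] : (1:ℝ) ≤ v j) hlt
      have hFle : ∑ j ∈ F, v j ≤ 2 * F.card := by
        have := Finset.sum_le_card_nsmul F v 2 (fun j _ => by
          rcases hval j with h | h | h <;> rw [h] <;> norm_num)
        rw [nsmul_eq_mul] at this
        linarith
      have hvBsum : (s:ℝ) ≤ ∑ j ∈ S i, v j := hvB'
      have hcard : (s:ℝ) ≤ 2 * F.card := by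
        rw [← hsplit, hzero, add_zero] at hvBsum
        linarith
      have hcardN : s ≤ 2 * F.card := by exact_mod_cast hcard
      have hkF : k ≤ F.card := by omega
      obtain ⟨T, hTF, hTcard⟩ := Finset.exists_subset_card_eq hkF
      refine Set.mem_iUnion₂.mpr ⟨T, ?_, ?_⟩
      · exact Finset.mem_powersetCard.mpr
          ⟨hTF.trans (Finset.filter_subset _ _), hTcard⟩
      · intro j hj
        exact (Finset.mem_filter.mp (hTF hj)).2
    -- measure of each covering set
    have hCT : ∀ T ∈ Finset.powersetCard k (S i),
        D {v : Fin m → ℝ | ∀ j ∈ T, (1:ℝ) ≤ v j} ≤ ENNReal.ofReal (2*δ) ^ k := by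
      intro T hT
      obtain ⟨-, hTcard⟩ := Finset.mem_powersetCard.mp hT
      have hset : {v : Fin m → ℝ | ∀ j ∈ T, (1:ℝ) ≤ v j}
          = Set.pi Set.univ (fun j => if j ∈ T then Set.Ici (1:ℝ) else Set.univ) := by
        ext v
        simp only [Set.mem_setOf_eq, Set.mem_pi, Set.mem_univ, true_implies]
        constructor
        · intro h j
          split
          · exact h j ‹_›
          · trivial
        · intro h j hj
          have := h j
          rwa [if_pos hj] at this
      rw [hD, hset, Measure.pi_pi]
      have : ∀ j : Fin m, itemDist m δ (if j ∈ T then Set.Ici (1:ℝ) else Set.univ)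
          = if j ∈ T then itemDist m δ (Set.Ici (1:ℝ)) else 1 := by
        intro j; split <;> simp [measure_univ]
      rw [Finset.prod_congr rfl (fun j _ => this j), Finset.prod_ite_mem,
        Finset.univ_inter, Finset.prod_const, hTcard]
      exact pow_le_pow_left' (itemDist_Ici1 hm h0 h2) k
    -- bound D (B i) in ℝ≥0∞
    have hDBle : D (B i) ≤ ENNReal.ofReal ((s.choose k : ℝ) * (2*δ) ^ k) := by
      have h1 : D (B i) ≤ D (B i ∩ G) := by
        calc D (B i) ≤ D ((B i ∩ G) ∪ Gᶜ) := measure_mono (by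
              intro v hv
              by_cases hvG : v ∈ G
              · exact Or.inl ⟨hv, hvG⟩
              · exact Or.inr hvG)
          _ ≤ D (B i ∩ G) + D Gᶜ := measure_union_le _ _
          _ = D (B i ∩ G) := by rw [hGfull, add_zero]
      calc D (B i) ≤ D (⋃ T ∈ Finset.powersetCard k (S i),
              {v : Fin m → ℝ | ∀ j ∈ T, (1:ℝ) ≤ v j}) := h1.trans (measure_mono hcover)
        _ ≤ ∑ T ∈ Finset.powersetCard k (S i),
              D {v : Fin m → ℝ | ∀ j ∈ T, (1:ℝ) ≤ v j} :=
            measure_biUnion_finset_le _ _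
        _ ≤ ∑ _T ∈ Finset.powersetCard k (S i), ENNReal.ofReal (2*δ) ^ k :=
            Finset.sum_le_sum hCT
        _ = (s.choose k : ENNReal) * ENNReal.ofReal (2*δ) ^ k := by
            rw [Finset.sum_const, Finset.card_powersetCard, hS i, nsmul_eq_mul]
        _ = ENNReal.ofReal ((s.choose k : ℝ) * (2*δ) ^ k) := by
            rw [eq_comm, ENNReal.ofReal_mul (by positivity : (0:ℝ) ≤ (s.choose k : ℝ)),
              ENNReal.ofReal_pow (by positivity), ENNReal.ofReal_natCast]
    -- convert to reals
    have hreal : (D (B i)).toReal ≤ (s.choose k : ℝ) * (2*δ) ^ k := by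
      calc (D (B i)).toReal ≤ (ENNReal.ofReal ((s.choose k : ℝ) * (2*δ) ^ k)).toReal :=
            ENNReal.toReal_mono ENNReal.ofReal_ne_top hDBle
        _ = (s.choose k : ℝ) * (2*δ) ^ k := ENNReal.toReal_ofReal (by positivity)
    -- arithmetic
    have hchoose : (s.choose k : ℝ) ≤ 2 ^ s := by
      have : s.choose k ≤ 2 ^ s := by
        calc s.choose k ≤ ∑ j ∈ Finset.range (s+1), s.choose j :=
              Finset.single_le_sum (fun j _ => Nat.zero_le _)
                (Finset.mem_range.mpr (by omega))
          _ = 2 ^ s := Nat.sum_range_choose s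
      exact_mod_cast this
    have h2δpos : (0:ℝ) < 2*δ := by linarith
    have h2δle : (2:ℝ)*δ ≤ 1 := by linarith
    have hpow1 : ((2:ℝ)*δ) ^ k = (2*δ) ^ (k:ℝ) := (Real.rpow_natCast _ k).symm
    have hpow2 : ((2:ℝ)*δ) ^ (k:ℝ) ≤ (2*δ) ^ ((s:ℝ)/2) := by
      apply Real.rpow_le_rpow_of_exponent_ge h2δpos h2δle
      have : s ≤ 2 * k := by omega
      have : (s:ℝ) ≤ 2 * k := by exact_mod_cast this
      linarith
    have hpow3 : ((2:ℝ)) ^ s = (4:ℝ) ^ ((s:ℝ)/2) := by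
      have h4 : (4:ℝ) = (2:ℝ) ^ (2:ℝ) := by
        rw [show (2:ℝ) = ((2:ℕ):ℝ) by norm_num, Real.rpow_natCast]
        norm_num
      rw [h4, ← Real.rpow_natCast (2:ℝ) s, ← Real.rpow_mul (by norm_num)]
      congr 1
      ring
    calc (D (B i)).toReal ≤ (s.choose k : ℝ) * (2*δ) ^ k := hreal
      _ ≤ 2 ^ s * (2*δ) ^ k := by
          apply mul_le_mul_of_nonneg_right hchoose (by positivity)
      _ = (4:ℝ) ^ ((s:ℝ)/2) * (2*δ) ^ (k:ℝ) := by rw [hpow3, hpow1]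
      _ ≤ (4:ℝ) ^ ((s:ℝ)/2) * (2*δ) ^ ((s:ℝ)/2) := by
          apply mul_le_mul_of_nonneg_left hpow2 (by positivity)
      _ = (8*δ) ^ ((s:ℝ)/2) := by
          rw [← Real.mul_rpow (by norm_num) (by positivity)]
          norm_num
          ring_nf
  -- conclude
  calc revSel D σ ≤ ∫ v, g v ∂D := hrev
    _ = 2 * (D A).toReal + ∑ i, (D (B i)).toReal := hgval
    _ ≤ 2 * δ + ∑ _i : Fin t, (8*δ) ^ ((s:ℝ)/2) := by
        exact add_le_add (by linarith [hDA]) (Finset.sum_le_sum fun i _ => hDB i)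
    _ = 2 * δ + t * (8*δ) ^ ((s:ℝ)/2) := by
        rw [Finset.sum_const, Finset.card_univ, Fintype.card_fin, nsmul_eq_mul]
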